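/- arXiv:2210.16851 — 3 statements merged into one kernel-verified Lean document; each statement's English description precedes it below -/
import Mathlib

section
/- Let T > 1 (possibly T = ∞), let φ : [0,T) → ℝ be nonnegative and continuous with sup_{0 ≤ s ≤ 1} φ(s) > 0, and let K : [0,T) → ℝ be nonnegative and nondecreasing. Suppose there exist constants C₀ > 0 and ρ > 0 such that sup_{t ≤ s ≤ t+1} φ(s)^{1+ρ} ≤ C₀ (φ(t) − φ(t+1)) + K(t) for all 0 ≤ t ≤ T − 1. Then for all 0 ≤ t < T one has φ(t) ≤ ( C₀^{−1} ρ (t−1)⁺ + (sup_{0 ≤ s ≤ 1} φ(s))^{−ρ} )^{−1/ρ} + K(t)^{1/(ρ+1)}. -/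
/-- Superadditivity of `x ^ p` on nonneg reals for `p ≥ 1`. -/
lemma nakao_superadd {u v p : ℝ} (hu : 0 ≤ u) (hv : 0 ≤ v) (hp : 1 ≤ p) :
    u ^ p + v ^ p ≤ (u + v) ^ p := by
  have key : ∀ a b : ℝ, 0 ≤ a → 0 ≤ b → a ^ p ≤ a * (a + b) ^ (p - 1) := by
    intro a b ha hb
    rcases eq_or_lt_of_le ha with h | h
    · rw [← h, Real.zero_rpow (by linarith), zero_mul]
    · have hip : a ^ p = a * a ^ (p - 1) := by
        nth_rewrite 1 [show p = 1 + (p - 1) by ring]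
        rw [Real.rpow_add h, Real.rpow_one]
      rw [hip]
      exact mul_le_mul_of_nonneg_left
        (Real.rpow_le_rpow ha (by linarith) (by linarith)) ha
  calc u ^ p + v ^ p ≤ u * (u + v) ^ (p - 1) + v * (v + u) ^ (p - 1) :=
        add_le_add (key u v hu hv) (key v u hv hu)
    _ = (u + v) ^ (1 : ℝ) * (u + v) ^ (p - 1) := by
        rw [add_comm v u, Real.rpow_one]; ring
    _ = (u + v) ^ p := by
        rw [← Real.rpow_add' (by linarith) (by intro hc; simp at hc; linarith)]
        norm_num

/-- Key discrete Bernoulli-type step. -/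
lemma nakao_key {C₀ ρ X Y : ℝ} (hC₀ : 0 < C₀) (hρ : 0 < ρ)
    (hX : 0 < X) (hY : 0 < Y) (h : X ^ (1 + ρ) ≤ C₀ * (X - Y)) :
    X ^ (-ρ) + ρ / C₀ ≤ Y ^ (-ρ) := by
  set v := X ^ ρ / C₀ with hv
  have hXρ : 0 < X ^ ρ := Real.rpow_pos_of_pos hX ρ
  have hv0 : 0 < v := div_pos hXρ hC₀
  have hXpow : X ^ (1 + ρ) = X * X ^ ρ := by
    rw [Real.rpow_add hX, Real.rpow_one]
  have hYle : Y ≤ X * (1 - v) := by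
    rw [hXpow] at h
    rw [hv, ← mul_le_mul_iff_right₀ hC₀]
    have he : C₀ * (X * (1 - X ^ ρ / C₀)) = C₀ * X - X * X ^ ρ := by
      field_simp
    rw [he]
    nlinarith
  have h1v : 0 < 1 - v := by
    rcases le_or_gt (1 - v) 0 with hc | hc
    · nlinarith
    · exact hc
  have hb : (1 - v) ^ ρ * (1 + ρ * v) ≤ 1 := by
    have e1 : (1 - v) ^ ρ = Real.exp (Real.log (1 - v) * ρ) := by
      rw [Real.rpow_def_of_pos h1v, mul_comm]
    have e2 : Real.log (1 - v) * ρ ≤ (-v) * ρ := by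
      have := Real.log_le_sub_one_of_pos h1v
      nlinarith
    have e3 : (1 - v) ^ ρ ≤ Real.exp (-(ρ * v)) := by
      rw [e1]; exact Real.exp_le_exp.mpr (by linarith)
    have e4 : 1 + ρ * v ≤ Real.exp (ρ * v) := by
      have := Real.add_one_le_exp (ρ * v); linarith
    calc (1 - v) ^ ρ * (1 + ρ * v)
        ≤ Real.exp (-(ρ * v)) * Real.exp (ρ * v) :=
          mul_le_mul e3 e4 (by nlinarith) (Real.exp_nonneg _)
      _ = 1 := by rw [← Real.exp_add]; simp
  have h1vρ : 0 < (1 - v) ^ ρ := Real.rpow_pos_of_pos h1v ρ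
  have hgoal : 1 + ρ * v ≤ (1 - v) ^ (-ρ) := by
    rw [Real.rpow_neg h1v.le, ← one_div]
    rw [le_div_iff₀ h1vρ]
    linarith [hb]
  have hXn : 0 < X ^ (-ρ) := Real.rpow_pos_of_pos hX _
  have hstep1 : (X * (1 - v)) ^ (-ρ) ≤ Y ^ (-ρ) :=
    Real.rpow_le_rpow_of_nonpos hY hYle (by linarith)
  have hmul : (X * (1 - v)) ^ (-ρ) = X ^ (-ρ) * (1 - v) ^ (-ρ) :=
    Real.mul_rpow hX.le h1v.le
  have hXX : X ^ (-ρ) * X ^ ρ = 1 := by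
    rw [← Real.rpow_add hX]; simp
  have : X ^ (-ρ) * (1 + ρ * v) ≤ X ^ (-ρ) * (1 - v) ^ (-ρ) :=
    mul_le_mul_of_nonneg_left hgoal hXn.le
  have hexp : X ^ (-ρ) * (1 + ρ * v) = X ^ (-ρ) + ρ / C₀ := by
    have he : X ^ (-ρ) * (1 + ρ * (X ^ ρ / C₀))
        = X ^ (-ρ) + ρ * (X ^ (-ρ) * X ^ ρ) / C₀ := by ring
    rw [hv, he, hXX, mul_one]
  rw [hmul] at hstep1
  rw [hexp] at this
  linarith

/-- One induction step of the generalized Nakao iteration. -/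
lemma nakao_step {C₀ ρ κ x y w : ℝ} (hC₀ : 0 < C₀) (hρ : 0 < ρ) (hκ : 0 ≤ κ)
    (hx : 0 ≤ x) (hy : 0 ≤ y) (hw : 0 < w)
    (h1 : x ^ (1 + ρ) ≤ C₀ * (x - y) + κ)
    (h2 : y ^ (1 + ρ) ≤ C₀ * (x - y) + κ)
    (hind : max (x - κ ^ (1 / (1 + ρ))) 0 ≤ w ^ (-1 / ρ)) :
    max (y - κ ^ (1 / (1 + ρ))) 0 ≤ (w + ρ / C₀) ^ (-1 / ρ) := by
  set κ' := κ ^ (1 / (1 + ρ)) with hκ'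
  have hκ'0 : 0 ≤ κ' := Real.rpow_nonneg hκ _
  have hκpow : κ' ^ (1 + ρ) = κ := by
    rw [hκ', ← Real.rpow_mul hκ]
    rw [show (1 / (1 + ρ)) * (1 + ρ) = 1 by field_simp]
    exact Real.rpow_one κ
  have hwρ : 0 < w + ρ / C₀ := by positivity
  rcases le_or_gt y κ' with hcase | hcase
  · rw [max_eq_right (by linarith)]
    positivity
  · set Y := y - κ' with hY
    have hYpos : 0 < Y := by rw [hY]; linarith
    have hsup2 : Y ^ (1 + ρ) + κ ≤ y ^ (1 + ρ) := by
      have := nakao_superadd hYpos.le hκ'0 (by linarith : (1:ℝ) ≤ 1 + ρ)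
      rw [hκpow] at this
      rw [show Y + κ' = y by rw [hY]; ring] at this
      exact this
    have hY1 : Y ^ (1 + ρ) ≤ C₀ * (x - y) := by linarith
    have hYρpos : 0 < Y ^ (1 + ρ) := Real.rpow_pos_of_pos hYpos _
    have hxy : y < x := by nlinarith
    set X := x - κ' with hX
    have hXpos : 0 < X := by rw [hX]; linarith
    have hsup1 : X ^ (1 + ρ) + κ ≤ x ^ (1 + ρ) := by
      have := nakao_superadd hXpos.le hκ'0 (by linarith : (1:ℝ) ≤ 1 + ρ)
      rw [hκpow] at this
      rw [show X + κ' = x by rw [hX]; ring] at this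
      exact this
    have hX1 : X ^ (1 + ρ) ≤ C₀ * (X - Y) := by
      have : X - Y = x - y := by rw [hX, hY]; ring
      rw [this]; linarith
    have hkey := nakao_key hC₀ hρ hXpos hYpos hX1
    -- X ≤ w ^ (-1/ρ)
    have hXle : X ≤ w ^ (-1 / ρ) := le_trans (le_max_left _ _) hind
    have hwX : w ≤ X ^ (-ρ) := by
      have h1 : (w ^ (-1 / ρ)) ^ (-ρ) ≤ X ^ (-ρ) :=
        Real.rpow_le_rpow_of_nonpos hXpos hXle (by linarith)
      have h2 : (w ^ (-1 / ρ)) ^ (-ρ) = w := by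
        rw [← Real.rpow_mul hw.le]
        rw [show (-1 / ρ) * (-ρ) = 1 by field_simp]
        exact Real.rpow_one w
      linarith [h2 ▸ h1]
    have hfin : w + ρ / C₀ ≤ Y ^ (-ρ) := by linarith
    have hYfin : Y ≤ (w + ρ / C₀) ^ (-1 / ρ) := by
      have h1 : (Y ^ (-ρ)) ^ (-1 / ρ) ≤ (w + ρ / C₀) ^ (-1 / ρ) :=
        Real.rpow_le_rpow_of_nonpos hwρ hfin (by
          rw [neg_div]
          exact neg_nonpos.mpr (by positivity))
      have h2 : (Y ^ (-ρ)) ^ (-1 / ρ) = Y := by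
        rw [← Real.rpow_mul hYpos.le]
        rw [show (-ρ) * (-1 / ρ) = 1 by field_simp]
        exact Real.rpow_one Y
      linarith [h2 ▸ h1]
    exact max_le hYfin (by positivity)

/-- Nakao's generalized lemma, case `ρ > 0`. -/
theorem nakao_generalized_pos (T : EReal) (hT : 1 < T) (φ K : ℝ → ℝ)
    (hφ0 : ∀ t : ℝ, 0 ≤ t → (t : EReal) < T → 0 ≤ φ t)
    (hφc : ContinuousOn φ {t : ℝ | 0 ≤ t ∧ (t : EReal) < T})
    (hK0 : ∀ t : ℝ, 0 ≤ t → (t : EReal) < T → 0 ≤ K t)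
    (hKmono : ∀ s t : ℝ, 0 ≤ s → s ≤ t → (t : EReal) < T → K s ≤ K t)
    (hsup : 0 < sSup (φ '' Set.Icc 0 1))
    (C₀ ρ : ℝ) (hC₀ : 0 < C₀) (hρ : 0 < ρ)
    (hrec : ∀ t : ℝ, 0 ≤ t → (t : EReal) + 1 ≤ T →
      sSup ((fun s => φ s ^ (1 + ρ)) '' Set.Icc t (t + 1)) ≤
        C₀ * (φ t - φ (t + 1)) + K t) :
    ∀ t : ℝ, 0 ≤ t → (t : EReal) < T →
      φ t ≤ (C₀⁻¹ * ρ * max (t - 1) 0 + sSup (φ '' Set.Icc 0 1) ^ (-ρ)) ^ (-1 / ρ)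
        + K t ^ (1 / (ρ + 1)) := by
  intro t ht htT
  set M := sSup (φ '' Set.Icc 0 1) with hM
  have hMpos : 0 < M := hsup
  have hsub01 : Set.Icc (0 : ℝ) 1 ⊆ {t : ℝ | 0 ≤ t ∧ (t : EReal) < T} := by
    intro s hs
    refine ⟨hs.1, lt_of_le_of_lt ?_ hT⟩
    exact_mod_cast EReal.coe_le_coe_iff.mpr hs.2
  have hbdd : BddAbove (φ '' Set.Icc 0 1) :=
    (isCompact_Icc.image_of_continuousOn (hφc.mono hsub01)).bddAbove
  have hφleM : ∀ s : ℝ, s ∈ Set.Icc (0 : ℝ) 1 → φ s ≤ M := fun s hs =>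
    le_csSup hbdd ⟨s, hs, rfl⟩
  have hKt : 0 ≤ K t := hK0 t ht htT
  have hMρ : 0 < M ^ (-ρ) := Real.rpow_pos_of_pos hMpos _
  rcases le_or_gt t 1 with hle | hgt
  · -- easy case t ≤ 1
    rw [max_eq_right (by linarith), mul_zero, zero_add]
    have hval : (M ^ (-ρ)) ^ (-1 / ρ) = M := by
      rw [← Real.rpow_mul hMpos.le, show (-ρ) * (-1 / ρ) = 1 by field_simp]
      exact Real.rpow_one M
    rw [hval]
    have h1 : φ t ≤ M := hφleM t ⟨ht, hle⟩
    have h2 : 0 ≤ K t ^ (1 / (ρ + 1)) := Real.rpow_nonneg hKt _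
    linarith
  · -- main case t > 1
    set n := ⌈t - 1⌉₊ with hn
    have hn1 : t - 1 ≤ n := Nat.le_ceil _
    have hn2 : (n : ℝ) < t := by
      have := Nat.ceil_lt_add_one (show (0 : ℝ) ≤ t - 1 by linarith)
      linarith
    set σ := t - n with hσ
    have hσ0 : 0 < σ := by rw [hσ]; linarith
    have hσ1 : σ ≤ 1 := by rw [hσ]; linarith
    set κ := K t with hκ
    set κ' := κ ^ (1 / (1 + ρ)) with hκ'
    have hκ'0 : 0 ≤ κ' := Real.rpow_nonneg hKt _
    have hdomlt : ∀ s : ℝ, s ≤ t → (s : EReal) < T :=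
      fun s hs => lt_of_le_of_lt (by exact_mod_cast EReal.coe_le_coe_iff.mpr hs) htT
    -- the induction
    have hInv : ∀ j : ℕ, j ≤ n →
        max (φ (σ + j) - κ') 0 ≤ ((j : ℝ) * (ρ / C₀) + M ^ (-ρ)) ^ (-1 / ρ) := by
      intro j hj
      induction j with
      | zero =>
        simp only [Nat.cast_zero, zero_mul, zero_add, add_zero]
        have hval : (M ^ (-ρ)) ^ (-1 / ρ) = M := by
          rw [← Real.rpow_mul hMpos.le, show (-ρ) * (-1 / ρ) = 1 by field_simp]
          exact Real.rpow_one M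
        rw [hval]
        have := hφleM σ ⟨hσ0.le, hσ1⟩
        exact max_le (by linarith) hMpos.le
      | succ j ih =>
        have hjn : j ≤ n := by omega
        have hIH := ih hjn
        set s₀ := σ + (j : ℝ) with hs₀
        have hs₀0 : 0 ≤ s₀ := by positivity
        have hs₁t : s₀ + 1 ≤ t := by
          have : (j : ℝ) + 1 ≤ n := by exact_mod_cast hj
          rw [hs₀, hσ]; linarith
        have hs₁T : (s₀ : EReal) + 1 ≤ T := by
          have h1 : ((s₀ + 1 : ℝ) : EReal) ≤ (t : EReal) :=
            EReal.coe_le_coe_iff.mpr hs₁t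
          calc (s₀ : EReal) + 1 = ((s₀ + 1 : ℝ) : EReal) := by norm_cast
            _ ≤ (t : EReal) := h1
            _ ≤ T := htT.le
        have hrecS := hrec s₀ hs₀0 hs₁T
        -- sup bounds
        have hsubI : Set.Icc s₀ (s₀ + 1) ⊆ {t : ℝ | 0 ≤ t ∧ (t : EReal) < T} := by
          intro s hs
          exact ⟨le_trans hs₀0 hs.1, hdomlt s (le_trans hs.2 hs₁t)⟩
        have hcont : ContinuousOn (fun s => φ s ^ (1 + ρ)) (Set.Icc s₀ (s₀ + 1)) :=
          (hφc.mono hsubI).rpow_const (fun x _ => Or.inr (by linarith))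
        have hbddI : BddAbove ((fun s => φ s ^ (1 + ρ)) '' Set.Icc s₀ (s₀ + 1)) :=
          (isCompact_Icc.image_of_continuousOn hcont).bddAbove
        have hmem1 : φ s₀ ^ (1 + ρ) ≤
            sSup ((fun s => φ s ^ (1 + ρ)) '' Set.Icc s₀ (s₀ + 1)) :=
          le_csSup hbddI ⟨s₀, ⟨le_rfl, by linarith⟩, rfl⟩
        have hmem2 : φ (s₀ + 1) ^ (1 + ρ) ≤
            sSup ((fun s => φ s ^ (1 + ρ)) '' Set.Icc s₀ (s₀ + 1)) :=
          le_csSup hbddI ⟨s₀ + 1, ⟨by linarith, le_rfl⟩, rfl⟩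
        have hKle : K s₀ ≤ κ := hKmono s₀ t hs₀0 (by linarith) htT
        have h1 : φ s₀ ^ (1 + ρ) ≤ C₀ * (φ s₀ - φ (s₀ + 1)) + κ := by
          calc φ s₀ ^ (1 + ρ) ≤ _ := hmem1
            _ ≤ C₀ * (φ s₀ - φ (s₀ + 1)) + K s₀ := hrecS
            _ ≤ C₀ * (φ s₀ - φ (s₀ + 1)) + κ := by linarith
        have h2 : φ (s₀ + 1) ^ (1 + ρ) ≤ C₀ * (φ s₀ - φ (s₀ + 1)) + κ := by
          calc φ (s₀ + 1) ^ (1 + ρ) ≤ _ := hmem2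
            _ ≤ C₀ * (φ s₀ - φ (s₀ + 1)) + K s₀ := hrecS
            _ ≤ C₀ * (φ s₀ - φ (s₀ + 1)) + κ := by linarith
        have hφ0' : 0 ≤ φ s₀ := hφ0 s₀ hs₀0 (hdomlt s₀ (by linarith))
        have hφ1' : 0 ≤ φ (s₀ + 1) :=
          hφ0 (s₀ + 1) (by linarith) (hdomlt _ hs₁t)
        have hw : 0 < (j : ℝ) * (ρ / C₀) + M ^ (-ρ) := by positivity
        have hstep := nakao_step hC₀ hρ hKt hφ0' hφ1' hw h1 h2 hIH
        have hcast : σ + ((j + 1 : ℕ) : ℝ) = s₀ + 1 := by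
          rw [hs₀]; push_cast; ring
        have hcast2 : ((j + 1 : ℕ) : ℝ) * (ρ / C₀) + M ^ (-ρ)
            = ((j : ℝ) * (ρ / C₀) + M ^ (-ρ)) + ρ / C₀ := by
          push_cast; ring
        rw [hcast, hcast2]
        exact hstep
    -- conclude
    have hfin := hInv n le_rfl
    have hσn : σ + (n : ℝ) = t := by rw [hσ]; ring
    rw [hσn] at hfin
    have hmono : ((n : ℝ) * (ρ / C₀) + M ^ (-ρ)) ^ (-1 / ρ) ≤
        (C₀⁻¹ * ρ * max (t - 1) 0 + M ^ (-ρ)) ^ (-1 / ρ) := by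
      have hmax : max (t - 1) 0 = t - 1 := max_eq_left (by linarith)
      have hble : C₀⁻¹ * ρ * max (t - 1) 0 + M ^ (-ρ) ≤
          (n : ℝ) * (ρ / C₀) + M ^ (-ρ) := by
        rw [hmax]
        have : C₀⁻¹ * ρ * (t - 1) ≤ (n : ℝ) * (ρ / C₀) := by
          rw [show C₀⁻¹ * ρ * (t - 1) = (t - 1) * (ρ / C₀) by field_simp]
          exact mul_le_mul_of_nonneg_right hn1 (by positivity)
        linarith
      have hbpos : 0 < C₀⁻¹ * ρ * max (t - 1) 0 + M ^ (-ρ) := by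
        rw [hmax]
        have h0 : 0 ≤ C₀⁻¹ * ρ * (t - 1) :=
          mul_nonneg (by positivity) (by linarith)
        linarith [hMρ]
      exact Real.rpow_le_rpow_of_nonpos hbpos hble (by
        rw [neg_div]; exact neg_nonpos.mpr (by positivity))
    have hφt : φ t - κ' ≤ ((n : ℝ) * (ρ / C₀) + M ^ (-ρ)) ^ (-1 / ρ) :=
      le_trans (le_max_left _ _) hfin
    have hexp : κ' = κ ^ (1 / (ρ + 1)) := by
      rw [hκ', add_comm 1 ρ]
    rw [← hexp]
    linarith [hφt, hmono]
end

section
/- Let T > 1 (possibly T = ∞), let φ : [0,T) → ℝ be nonnegative and continuous, and let K : [0,T) → ℝ be nonnegative and nondecreasing. Suppose there exists a constant C₀ > 0 such that sup_{t ≤ s ≤ t+1} φ(s) ≤ C₀ (φ(t) − φ(t+1)) + K(t) for all 0 ≤ t ≤ T − 1. Then for all 0 ≤ t < T one has φ(t) ≤ (sup_{0 ≤ s ≤ 1} φ(s)) · ( C₀ / (1 + C₀) )^{⌊t⌋} + K(t). -/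
/-- Nakao's generalized lemma, case `ρ = 0`. Let `T > 1` (possibly `T = ∞`),
`φ` nonnegative and continuous on `[0,T)`, and `K` nonnegative and
nondecreasing on `[0,T)`. If
`sup_{t ≤ s ≤ t+1} φ(s) ≤ C₀ (φ(t) − φ(t+1)) + K(t)` for `0 ≤ t ≤ T−1`, then
`φ(t) ≤ (sup_{[0,1]} φ) (C₀/(1+C₀))^{⌊t⌋} + K(t)` for all `0 ≤ t < T`. -/
theorem nakao_generalized_zero (T : EReal) (hT : 1 < T) (φ K : ℝ → ℝ)
    (hφ0 : ∀ t : ℝ, 0 ≤ t → (t : EReal) < T → 0 ≤ φ t)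
    (hφc : ContinuousOn φ {t : ℝ | 0 ≤ t ∧ (t : EReal) < T})
    (hK0 : ∀ t : ℝ, 0 ≤ t → (t : EReal) < T → 0 ≤ K t)
    (hKmono : ∀ s t : ℝ, 0 ≤ s → s ≤ t → (t : EReal) < T → K s ≤ K t)
    (C₀ : ℝ) (hC₀ : 0 < C₀)
    (hrec : ∀ t : ℝ, 0 ≤ t → (t : EReal) + 1 ≤ T →
      sSup (φ '' Set.Icc t (t + 1)) ≤ C₀ * (φ t - φ (t + 1)) + K t) :
    ∀ t : ℝ, 0 ≤ t → (t : EReal) < T →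
      φ t ≤ sSup (φ '' Set.Icc 0 1) * (C₀ / (1 + C₀)) ^ ⌊t⌋₊ + K t := by
  set θ : ℝ := C₀ / (1 + C₀) with hθdef
  have hpos : (0:ℝ) < 1 + C₀ := by linarith
  have hθ0 : 0 ≤ θ := div_nonneg hC₀.le hpos.le
  have hθ1 : θ < 1 := (div_lt_one hpos).2 (by linarith)
  set S : ℝ := sSup (φ '' Set.Icc 0 1) with hSdef
  -- step lemma
  have step : ∀ t : ℝ, 0 ≤ t → ((t + 1 : ℝ) : EReal) < T →
      φ (t + 1) ≤ θ * φ t + (1 - θ) * K t := by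
    intro t ht hlt
    have hsub : Set.Icc t (t + 1) ⊆ {x : ℝ | 0 ≤ x ∧ (x : EReal) < T} := by
      intro x hx
      refine ⟨le_trans ht hx.1, lt_of_le_of_lt ?_ hlt⟩
      exact_mod_cast EReal.coe_le_coe_iff.2 hx.2
    have hbdd : BddAbove (φ '' Set.Icc t (t + 1)) :=
      (isCompact_Icc.image_of_continuousOn (hφc.mono hsub)).bddAbove
    have hmem : φ (t + 1) ∈ φ '' Set.Icc t (t + 1) :=
      ⟨t + 1, ⟨by linarith, le_refl _⟩, rfl⟩
    have h1 : φ (t + 1) ≤ sSup (φ '' Set.Icc t (t + 1)) := le_csSup hbdd hmem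
    have h2 : sSup (φ '' Set.Icc t (t + 1)) ≤ C₀ * (φ t - φ (t + 1)) + K t := by
      apply hrec t ht
      have : (t : EReal) + 1 = ((t + 1 : ℝ) : EReal) := by norm_cast
      rw [this]; exact hlt.le
    have key : φ (t + 1) * (1 + C₀) ≤ C₀ * φ t + K t := by nlinarith [h1.trans h2]
    have heq : θ * φ t + (1 - θ) * K t = (C₀ * φ t + K t) / (1 + C₀) := by
      rw [hθdef]
      field_simp [hpos.ne']
      ring
    rw [heq, le_div_iff₀ hpos]
    exact key
  have hS : ∀ s : ℝ, 0 ≤ s → s ≤ 1 → φ s ≤ S := by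
    intro s h0 h1
    have hsub : Set.Icc (0:ℝ) 1 ⊆ {x : ℝ | 0 ≤ x ∧ (x : EReal) < T} := by
      intro x hx
      refine ⟨hx.1, lt_of_le_of_lt ?_ hT⟩
      exact_mod_cast EReal.coe_le_coe_iff.2 hx.2
    have hbdd : BddAbove (φ '' Set.Icc (0:ℝ) 1) :=
      (isCompact_Icc.image_of_continuousOn (hφc.mono hsub)).bddAbove
    exact le_csSup hbdd ⟨s, ⟨h0, h1⟩, rfl⟩
  -- main induction
  have claim : ∀ n : ℕ, ∀ s : ℝ, 0 ≤ s → s ≤ 1 →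
      (((n : ℝ) + s : ℝ) : EReal) < T →
      φ ((n : ℝ) + s) ≤ S * θ ^ n + (1 - θ ^ n) * K ((n : ℝ) + s) := by
    intro n
    induction n with
    | zero =>
      intro s h0 h1 _
      simp only [Nat.cast_zero, pow_zero, zero_add, mul_one, sub_self, zero_mul, add_zero]
      exact hS s h0 h1
    | succ n ih =>
      intro s h0 h1 hlt
      have hcast : ((n + 1 : ℕ) : ℝ) + s = ((n : ℝ) + s) + 1 := by push_cast; ring
      have hn0 : (0:ℝ) ≤ (n : ℝ) + s := by positivity
      have hlt' : ((((n : ℝ) + s) + 1 : ℝ) : EReal) < T := by rw [← hcast]; exact hlt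
      have hstep := step ((n : ℝ) + s) hn0 hlt'
      have hltn : (((n : ℝ) + s : ℝ) : EReal) < T := by
        refine lt_trans ?_ hlt'
        exact_mod_cast EReal.coe_lt_coe_iff.2 (by linarith : (n : ℝ) + s < ((n : ℝ) + s) + 1)
      have hih := ih s h0 h1 hltn
      have hKm : K ((n : ℝ) + s) ≤ K (((n + 1 : ℕ) : ℝ) + s) := by
        apply hKmono _ _ hn0 (by rw [hcast]; linarith) (by rw [hcast]; exact hlt')
      have hK1 : 0 ≤ K ((n : ℝ) + s) := hK0 _ hn0 hltn
      have hθn : θ ^ n ≤ 1 := pow_le_one₀ hθ0 hθ1.le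
      have hθn0 : 0 ≤ θ ^ n := pow_nonneg hθ0 n
      have hθn1 : θ ^ (n + 1) ≤ 1 := pow_le_one₀ hθ0 hθ1.le
      have hθn1' : (0:ℝ) ≤ 1 - θ ^ (n + 1) := by linarith
      rw [hcast]
      rw [hcast] at hKm
      calc φ (((n : ℝ) + s) + 1) ≤ θ * φ ((n : ℝ) + s) + (1 - θ) * K ((n : ℝ) + s) := hstep
        _ ≤ θ * (S * θ ^ n + (1 - θ ^ n) * K ((n : ℝ) + s)) + (1 - θ) * K ((n : ℝ) + s) := by
            nlinarith
        _ = S * θ ^ (n + 1) + (1 - θ ^ (n + 1)) * K ((n : ℝ) + s) := by ring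
        _ ≤ S * θ ^ (n + 1) + (1 - θ ^ (n + 1)) * K (((n : ℝ) + s) + 1) := by
            nlinarith [mul_le_mul_of_nonneg_left hKm hθn1']
  intro t ht hlt
  set n : ℕ := ⌊t⌋₊ with hn
  have hnle : (n : ℝ) ≤ t := Nat.floor_le ht
  have htlt : t < (n : ℝ) + 1 := Nat.lt_floor_add_one t
  have hteq : t = (n : ℝ) + (t - n) := by ring
  have h := claim n (t - n) (by linarith) (by linarith) (by rw [← hteq]; exact hlt)
  rw [← hteq] at h
  have hK1 : 0 ≤ K t := hK0 t ht hlt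
  have hθn0 : 0 ≤ θ ^ n := pow_nonneg hθ0 n
  nlinarith
end

section
/- Let ρ > 0 and C₀ > 0 be real constants, and let a, b be real numbers with a ≥ b > 0 and a^{1+ρ} ≤ C₀ (a − b). Then b^{−ρ} ≥ a^{−ρ} + ρ C₀^{−1}. -/
lemma key_rpow_bernoulli (ρ t : ℝ) (hρ : 0 < ρ) (ht0 : 0 < t) (ht1 : t ≤ 1) :
    1 + ρ * (1 - t) ≤ t ^ (-ρ) := by
  have hteq : t ^ (-ρ) = (t⁻¹) ^ ρ := by
    rw [Real.inv_rpow ht0.le, Real.rpow_neg ht0.le]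
  rcases le_total 1 ρ with h1 | h1
  · have hs : -1 ≤ t⁻¹ - 1 := by
      have : (0:ℝ) < t⁻¹ := inv_pos.mpr ht0
      linarith
    have hB := one_add_mul_self_le_rpow_one_add hs h1
    have heq : (1 + (t⁻¹ - 1)) = t⁻¹ := by ring
    rw [heq] at hB
    have hst : 1 - t ≤ t⁻¹ - 1 := by
      have hd : t⁻¹ - 1 - (1 - t) = (1 - t)^2 / t := by field_simp
      nlinarith [div_nonneg (sq_nonneg (1-t)) ht0.le]
    have : ρ * (1 - t) ≤ ρ * (t⁻¹ - 1) := by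
      apply mul_le_mul_of_nonneg_left hst hρ.le
    rw [hteq]; linarith
  · have hB := rpow_one_add_le_one_add_mul_self (s := t - 1) (by linarith) hρ.le h1
    have heq : (1 + (t - 1)) = t := by ring
    rw [heq] at hB
    have hmul : t ^ (-ρ) * t ^ ρ = 1 := by
      rw [← Real.rpow_add ht0]; simp
    have hpos : 0 < t ^ ρ := Real.rpow_pos_of_pos ht0 ρ
    have hpos' : 0 < t ^ (-ρ) := Real.rpow_pos_of_pos ht0 (-ρ)
    nlinarith [mul_pos hρ hρ, sq_nonneg (1-t), mul_nonneg (mul_nonneg hρ.le hρ.le) (sq_nonneg (1-t))]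

/-- If `a ≥ b > 0` and `a^(1+ρ) ≤ C₀ (a − b)` with `ρ, C₀ > 0`,
then `b^(−ρ) ≥ a^(−ρ) + ρ C₀⁻¹`. -/
theorem rpow_neg_ge_of_rpow_le (ρ C₀ a b : ℝ) (hρ : 0 < ρ) (hC₀ : 0 < C₀)
    (hb : 0 < b) (hba : b ≤ a) (h : a ^ (1 + ρ) ≤ C₀ * (a - b)) :
    a ^ (-ρ) + ρ * C₀⁻¹ ≤ b ^ (-ρ) := by
  have ha : 0 < a := hb.trans_le hba
  set t := b / a with ht
  have ht0 : 0 < t := div_pos hb ha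
  have ht1 : t ≤ 1 := (div_le_one ha).mpr hba
  have hkey := key_rpow_bernoulli ρ t hρ ht0 ht1
  have hbeq : b = a * t := by rw [ht, mul_comm, div_mul_cancel₀ b ha.ne']
  have hbrpow : b ^ (-ρ) = a ^ (-ρ) * t ^ (-ρ) := by
    rw [hbeq, Real.mul_rpow ha.le ht0.le]
  have harpow : 0 < a ^ (-ρ) := Real.rpow_pos_of_pos ha _
  have haρ : 0 < a ^ (1 + ρ) := Real.rpow_pos_of_pos ha _
  -- C₀⁻¹ ≤ (a - b)/a^(1+ρ) = (1 - t) * a^(-ρ)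
  have h1 : C₀⁻¹ * a ^ (1 + ρ) ≤ a - b := by
    rw [inv_mul_le_iff₀ hC₀]; exact h
  have h2 : a ^ (1 + ρ) = a * a ^ ρ := by
    rw [Real.rpow_add ha, Real.rpow_one]
  have h3 : a ^ (-ρ) * a ^ ρ = 1 := by
    rw [← Real.rpow_add ha]; simp
  have h4 : C₀⁻¹ ≤ (1 - t) * a ^ (-ρ) := by
    have h5 : (1 - t) * a ^ (-ρ) * a ^ (1 + ρ) = a - b := by
      rw [h2]
      have hab : (1 - t) * a = a - b := by rw [ht, sub_mul, one_mul, div_mul_cancel₀ b ha.ne']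
      nlinarith [h3]
    refine le_of_mul_le_mul_right ?_ haρ
    rw [h5]; exact h1
  calc a ^ (-ρ) + ρ * C₀⁻¹
      ≤ a ^ (-ρ) + ρ * ((1 - t) * a ^ (-ρ)) := by
        have := mul_le_mul_of_nonneg_left h4 hρ.le
        linarith
    _ = a ^ (-ρ) * (1 + ρ * (1 - t)) := by ring
    _ ≤ a ^ (-ρ) * t ^ (-ρ) := by
        apply mul_le_mul_of_nonneg_left hkey harpow.le
    _ = b ^ (-ρ) := hbrpow.symm
end
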